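/- Let d_0 be a degree-0 derivation from 𝔏 to 𝔏⊗𝔏 with d_0(L_{kε}) = 0 for all k ∈ ℤ. Then d_0(G_p) = 0 for all p. Similarly d_0(L_p) = d_0(I_p) = d_0(H_p) = 0 for all p, hence d_0 = 0. -/

import Mathlib

open Finsupp

/-- Basis of the generalized super W-algebra 𝔏 (indices range over ℝ;
the actual algebra 𝔏 has indices restricted to Γ resp. s+Γ, see `good`). -/
inductive BasisL : Type
  | L : ℝ → BasisL
  | I : ℝ → BasisL
  | G : ℝ → BasisL
  | H : ℝ → BasisL

noncomputable instance : DecidableEq BasisL := Classical.decEq _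

/-- The ambient free ℂ-module on the basis. -/
abbrev LL : Type := BasisL →₀ ℂ
/-- Model for 𝔏 ⊗ 𝔏 : free module on pairs of basis elements. -/
abbrev VV : Type := (BasisL × BasisL) →₀ ℂ
/-- Model for 𝔏 ⊗ 𝔏 ⊗ 𝔏. -/
abbrev WW : Type := (BasisL × BasisL × BasisL) →₀ ℂ

noncomputable def bL (p : ℝ) : LL := Finsupp.single (BasisL.L p) 1
noncomputable def bI (p : ℝ) : LL := Finsupp.single (BasisL.I p) 1
noncomputable def bG (r : ℝ) : LL := Finsupp.single (BasisL.G r) 1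
noncomputable def bH (r : ℝ) : LL := Finsupp.single (BasisL.H r) 1

/-- Parity (0 = even, 1 = odd). -/
def pN : BasisL → ℕ
  | BasisL.L _ => 0
  | BasisL.I _ => 0
  | BasisL.G _ => 1
  | BasisL.H _ => 1

/-- Z_s-degree of a basis element. -/
def degB : BasisL → ℝ
  | BasisL.L p => p
  | BasisL.I p => p
  | BasisL.G r => r
  | BasisL.H r => r

/-- Membership of a basis element in the actual algebra 𝔏 :
L_p, I_p for p ∈ Γ and G_r, H_r for r ∈ s + Γ. -/
def good (Γ : AddSubgroup ℝ) (s : ℝ) : BasisL → Prop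
  | BasisL.L p => p ∈ Γ
  | BasisL.I p => p ∈ Γ
  | BasisL.G r => r - s ∈ Γ
  | BasisL.H r => r - s ∈ Γ

/-- The super-bracket on basis elements (extended by super skew-symmetry). -/
noncomputable def bb : BasisL → BasisL → LL
  | BasisL.L p, BasisL.L q => ((p - q : ℝ) : ℂ) • bL (p + q)
  | BasisL.L p, BasisL.I q => ((p - q : ℝ) : ℂ) • bI (p + q)
  | BasisL.I p, BasisL.L q => ((p - q : ℝ) : ℂ) • bI (p + q)
  | BasisL.L p, BasisL.G r => ((p / 2 - r : ℝ) : ℂ) • bG (p + r)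
  | BasisL.G r, BasisL.L p => ((-(p / 2 - r) : ℝ) : ℂ) • bG (p + r)
  | BasisL.L p, BasisL.H r => ((p / 2 - r : ℝ) : ℂ) • bH (p + r)
  | BasisL.H r, BasisL.L p => ((-(p / 2 - r) : ℝ) : ℂ) • bH (p + r)
  | BasisL.G r, BasisL.G t => bI (r + t)
  | BasisL.I p, BasisL.G r => ((p - 2 * r : ℝ) : ℂ) • bH (p + r)
  | BasisL.G r, BasisL.I p => ((-(p - 2 * r) : ℝ) : ℂ) • bH (p + r)
  | _, _ => 0

/-- The super-bracket, extended bilinearly. -/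
noncomputable def br (x y : LL) : LL :=
  x.sum fun a ca => y.sum fun b cb => (ca * cb) • bb a b

/-- u ⊗ b for u ∈ 𝔏, b a basis element. -/
noncomputable def tenL (u : LL) (b : BasisL) : VV :=
  u.sum fun a ca => Finsupp.single (a, b) ca

/-- a ⊗ u for a a basis element, u ∈ 𝔏. -/
noncomputable def tenR (a : BasisL) (u : LL) : VV :=
  u.sum fun b cb => Finsupp.single (a, b) cb

/-- Super adjoint diagonal action of a basis element on a ⊗ b :
c ∘ (a ⊗ b) = [c,a] ⊗ b + (−1)^{[c][a]} a ⊗ [c,b]. -/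
noncomputable def actB (c a b : BasisL) : VV :=
  tenL (bb c a) b + ((-1 : ℂ) ^ (pN c * pN a)) • tenR a (bb c b)

/-- Super adjoint diagonal action of x ∈ 𝔏 on u ∈ 𝔏 ⊗ 𝔏. -/
noncomputable def act (x : LL) (u : VV) : VV :=
  x.sum fun c cc => u.sum fun ab cab => (cc * cab) • actB c ab.1 ab.2

/-- The super-twist τ(a ⊗ b) = (−1)^{[a][b]} b ⊗ a. -/
noncomputable def tauV (u : VV) : VV :=
  u.sum fun ab c => (((-1 : ℂ) ^ (pN ab.1 * pN ab.2)) * c) • Finsupp.single (ab.2, ab.1) (1 : ℂ)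

noncomputable def t1 (u : LL) (b c : BasisL) : WW :=
  u.sum fun a ca => Finsupp.single (a, b, c) ca
noncomputable def t2 (a : BasisL) (u : LL) (c : BasisL) : WW :=
  u.sum fun b cb => Finsupp.single (a, b, c) cb
noncomputable def t3 (a b : BasisL) (u : LL) : WW :=
  u.sum fun c cc => Finsupp.single (a, b, c) cc
noncomputable def t23 (a : BasisL) (u : VV) : WW :=
  u.sum fun bc x => Finsupp.single (a, bc.1, bc.2) x

/-- c(r) = [r¹²,r¹³] + [r¹²,r²³] + [r¹³,r²³] ∈ 𝔏⊗𝔏⊗𝔏. -/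
noncomputable def cYB (r : VV) : WW :=
  r.sum fun ab x => r.sum fun ab' y =>
    (x * y) •
      (((-1 : ℂ) ^ (pN ab'.1 * pN ab.2)) • t1 (bb ab.1 ab'.1) ab.2 ab'.2
        + t2 ab.1 (bb ab.2 ab'.1) ab'.2
        + ((-1 : ℂ) ^ (pN ab'.1 * pN ab.2)) • t3 ab.1 ab'.1 (bb ab.2 ab'.2))

/-- Super adjoint diagonal action of a basis element on a ⊗ b ⊗ c. -/
noncomputable def act3B (d a b c : BasisL) : WW :=
  t1 (bb d a) b c + ((-1 : ℂ) ^ (pN d * pN a)) • t2 a (bb d b) c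
    + ((-1 : ℂ) ^ (pN d * (pN a + pN b))) • t3 a b (bb d c)

/-- Super adjoint diagonal action of x ∈ 𝔏 on 𝔏⊗𝔏⊗𝔏. -/
noncomputable def act3 (x : LL) (u : WW) : WW :=
  x.sum fun d cd => u.sum fun abc cu => (cd * cu) • act3B d abc.1 abc.2.1 abc.2.2

/-- The super-cyclic map ξ(a⊗b⊗c) = (−1)^{[a]([b]+[c])} b⊗c⊗a. -/
noncomputable def xiW (u : WW) : WW :=
  u.sum fun abc x =>
    (((-1 : ℂ) ^ (pN abc.1 * (pN abc.2.1 + pN abc.2.2))) * x) •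
      Finsupp.single (abc.2.1, abc.2.2, abc.1) (1 : ℂ)

/-- (1 ⊗ Δ) applied to an element of 𝔏⊗𝔏. -/
noncomputable def oneTensor (D : LL →ₗ[ℂ] VV) (u : VV) : WW :=
  u.sum fun ab c => c • t23 ab.1 (D (Finsupp.single ab.2 1))

/-- x ∈ 𝔏 (support consists of good basis elements). -/
def inL (Γ : AddSubgroup ℝ) (s : ℝ) (x : LL) : Prop :=
  ∀ a ∈ x.support, good Γ s a

/-- u ∈ 𝔏 ⊗ 𝔏. -/
def inV (Γ : AddSubgroup ℝ) (s : ℝ) (u : VV) : Prop :=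
  ∀ ab ∈ u.support, good Γ s ab.1 ∧ good Γ s ab.2

/-- x ∈ 𝔏_p, the homogeneous component of degree p. -/
def inComp (Γ : AddSubgroup ℝ) (s : ℝ) (p : ℝ) (x : LL) : Prop :=
  ∀ a ∈ x.support, good Γ s a ∧ degB a = p

/-- u ∈ 𝔙_r = ⊕_{p+q=r} 𝔏_p ⊗ 𝔏_q. -/
def inCompV (Γ : AddSubgroup ℝ) (s : ℝ) (r : ℝ) (u : VV) : Prop :=
  ∀ ab ∈ u.support, good Γ s ab.1 ∧ good Γ s ab.2 ∧ degB ab.1 + degB ab.2 = r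

/-- x is ℤ₂-homogeneous of parity i. -/
def IsHomogP (x : LL) (i : ℕ) : Prop :=
  ∀ a ∈ x.support, pN a % 2 = i % 2

/-- u ∈ 𝔏⊗𝔏 is ℤ₂-homogeneous of parity i. -/
def IsHomogVP (u : VV) (i : ℕ) : Prop :=
  ∀ ab ∈ u.support, (pN ab.1 + pN ab.2) % 2 = i % 2

/-- d : 𝔏 → 𝔏⊗𝔏 is a homogeneous derivation of parity ι (for the super
adjoint diagonal action):
d([x,y]) = (−1)^{[d][x]} x∘d(y) − (−1)^{[y]([d]+[x])} y∘d(x). -/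
def IsDer (Γ : AddSubgroup ℝ) (s : ℝ) (ι : ℕ) (d : LL →ₗ[ℂ] VV) : Prop :=
  (∀ x, inL Γ s x → inV Γ s (d x)) ∧
  (∀ (i : ℕ) (x : LL), inL Γ s x → IsHomogP x i → IsHomogVP (d x) (i + ι)) ∧
  ∀ (i j : ℕ) (x y : LL), inL Γ s x → inL Γ s y → IsHomogP x i → IsHomogP y j →
    d (br x y)
      = ((-1 : ℂ) ^ (ι * i)) • act x (d y) - ((-1 : ℂ) ^ (j * (ι + i))) • act y (d x)

/-- d has degree t : d(𝔏_p) ⊆ 𝔙_{p+t}. -/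
def HasDeg (Γ : AddSubgroup ℝ) (s : ℝ) (t : ℝ) (d : LL →ₗ[ℂ] VV) : Prop :=
  ∀ (p : ℝ) (x : LL), inComp Γ s p x → inCompV Γ s (p + t) (d x)

/-! ### Auxiliary machinery -/

/-- Shift the index of a basis element by `a`. -/
def sh (a : ℝ) : BasisL → BasisL
  | BasisL.L q => BasisL.L (q + a)
  | BasisL.I q => BasisL.I (q + a)
  | BasisL.G r => BasisL.G (r + a)
  | BasisL.H r => BasisL.H (r + a)

/-- Structure constant of `[L_a, x]`. -/
noncomputable def co (a : ℝ) : BasisL → ℂ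
  | BasisL.L q => ((a - q : ℝ) : ℂ)
  | BasisL.I q => ((a - q : ℝ) : ℂ)
  | BasisL.G r => ((a / 2 - r : ℝ) : ℂ)
  | BasisL.H r => ((a / 2 - r : ℝ) : ℂ)

/-- Quadratic coefficient of the eigenvalue polynomial. -/
noncomputable def cc0 : BasisL → ℝ
  | BasisL.L _ => -2
  | BasisL.I _ => -2
  | BasisL.G _ => -(3/4)
  | BasisL.H _ => -(3/4)

lemma sh_sh (a b : ℝ) (x : BasisL) : sh a (sh b x) = sh (b + a) x := by
  cases x <;> simp [sh, add_assoc]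

lemma sh_zero (x : BasisL) : sh 0 x = x := by cases x <;> simp [sh]

lemma sh_neg_cancel (a : ℝ) (x : BasisL) : sh a (sh (-a) x) = x := by
  rw [sh_sh, neg_add_cancel, sh_zero]

lemma sh_eq_iff (a : ℝ) (z x : BasisL) : sh a z = x ↔ z = sh (-a) x := by
  constructor
  · rintro rfl; rw [sh_sh, add_neg_cancel, sh_zero]
  · rintro rfl; exact sh_neg_cancel a x

lemma degB_sh (a : ℝ) (x : BasisL) : degB (sh a x) = degB x + a := by
  cases x <;> rfl

lemma good_sh (Γ : AddSubgroup ℝ) (s a : ℝ) (ha : a ∈ Γ) (x : BasisL)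
    (hx : good Γ s x) : good Γ s (sh a x) := by
  cases x with
  | L q => exact AddSubgroup.add_mem Γ hx ha
  | I q => exact AddSubgroup.add_mem Γ hx ha
  | G r => show r + a - s ∈ Γ
           have : r + a - s = (r - s) + a := by ring
           rw [this]; exact AddSubgroup.add_mem Γ hx ha
  | H r => show r + a - s ∈ Γ
           have : r + a - s = (r - s) + a := by ring
           rw [this]; exact AddSubgroup.add_mem Γ hx ha

lemma bb_L (a : ℝ) (x : BasisL) :
    bb (BasisL.L a) x = co a x • Finsupp.single (sh a x) 1 := by
  cases x <;> simp [bb, co, sh, bL, bI, bG, bH, add_comm]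

lemma br_single (b : ℝ) (X : BasisL) :
    br (bL b) (Finsupp.single X 1) = bb (BasisL.L b) X := by
  unfold br bL
  rw [Finsupp.sum_single_index, Finsupp.sum_single_index] <;> simp

lemma act_zero (x : LL) : act x 0 = 0 := by
  simp [act]

lemma nu_eq (a : ℝ) (z : BasisL) :
    co a (sh (-a) z) * co (-a) z
      = ((cc0 z * a ^ 2 - degB z * a + degB z ^ 2 : ℝ) : ℂ) := by
  cases z <;> · simp only [co, sh, cc0, degB]; push_cast; ring

lemma actB_L (a : ℝ) (x' y' : BasisL) :
    actB (BasisL.L a) x' y'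
      = Finsupp.single (sh a x', y') (co a x')
        + Finsupp.single (x', sh a y') (co a y') := by
  unfold actB
  rw [bb_L, bb_L]
  have h1 : tenL (co a x' • Finsupp.single (sh a x') 1) y'
      = Finsupp.single (sh a x', y') (co a x') := by
    rw [Finsupp.smul_single', mul_one]
    unfold tenL
    rw [Finsupp.sum_single_index]
    simp
  have h2 : tenR x' (co a y' • Finsupp.single (sh a y') 1)
      = Finsupp.single (x', sh a y') (co a y') := by
    rw [Finsupp.smul_single', mul_one]
    unfold tenR
    rw [Finsupp.sum_single_index]
    simp
  rw [h1, h2]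
  simp [pN]

lemma act_bL_apply (a : ℝ) (v : VV) (x y : BasisL) :
    (act (bL a) v) (x, y)
      = co a (sh (-a) x) * v (sh (-a) x, y)
        + co a (sh (-a) y) * v (x, sh (-a) y) := by
  unfold act bL
  rw [Finsupp.sum_single_index (by simp)]
  rw [Finsupp.sum_apply]
  have step : ∀ (p : BasisL × BasisL) (c : ℂ),
      ((1 * c) • actB (BasisL.L a) p.1 p.2) (x, y)
        = (if p = (sh (-a) x, y) then c * co a p.1 else 0)
          + (if p = (x, sh (-a) y) then c * co a p.2 else 0) := by
    intro p c
    rw [actB_L]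
    rw [one_mul, Finsupp.smul_apply, Finsupp.add_apply]
    rw [Finsupp.single_apply, Finsupp.single_apply]
    have e1 : ((sh a p.1, p.2) = (x, y)) ↔ (p = (sh (-a) x, y)) := by
      simp only [Prod.ext_iff, sh_eq_iff]
    have e2 : ((p.1, sh a p.2) = (x, y)) ↔ (p = (x, sh (-a) y)) := by
      simp only [Prod.ext_iff, sh_eq_iff]
    rw [smul_add, smul_ite, smul_ite]
    simp only [smul_eq_mul, smul_zero]
    rw [if_congr e1 rfl rfl, if_congr e2 rfl rfl]
    simp
  calc (v.sum fun p c => ((1 * c) • actB (BasisL.L a) p.1 p.2) (x, y))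
      = v.sum fun p c =>
          (if p = (sh (-a) x, y) then c * co a p.1 else 0)
          + (if p = (x, sh (-a) y) then c * co a p.2 else 0) := by
        exact Finsupp.sum_congr fun p hp => step p (v p)
    _ = (v.sum fun p c => if p = (sh (-a) x, y) then c * co a p.1 else 0)
        + (v.sum fun p c => if p = (x, sh (-a) y) then c * co a p.2 else 0) := by
        rw [Finsupp.sum_add]
    _ = _ := by
        rw [Finsupp.sum, Finsupp.sum, Finset.sum_ite_eq', Finset.sum_ite_eq']
        by_cases h1 : (sh (-a) x, y) ∈ v.support <;>
          by_cases h2 : (x, sh (-a) y) ∈ v.support <;>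
          simp only [h1, h2, if_true, if_false] <;>
          simp_all [Finsupp.notMem_support_iff] <;> ring

lemma inL_single (Γ : AddSubgroup ℝ) (s : ℝ) (X : BasisL) (hX : good Γ s X)
    (c : ℂ) : inL Γ s (Finsupp.single X c) := by
  intro a ha
  have := Finsupp.support_single_subset ha
  rw [Finset.mem_singleton] at this
  rwa [this]

lemma isHomogP_single (X : BasisL) (c : ℂ) :
    IsHomogP (Finsupp.single X c) (pN X) := by
  intro a ha
  have := Finsupp.support_single_subset ha
  rw [Finset.mem_singleton] at this
  rw [this]

lemma der_step (Γ : AddSubgroup ℝ) (s : ℝ) (ι : ℕ) (d : LL →ₗ[ℂ] VV)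
    (hd : IsDer Γ s ι d) (b : ℝ) (hb : b ∈ Γ) (hdb : d (bL b) = 0)
    (X : BasisL) (hX : good Γ s X) :
    co b X • d (Finsupp.single (sh b X) 1) = act (bL b) (d (Finsupp.single X 1)) := by
  have h1 : IsHomogP (bL b) 0 := isHomogP_single _ _
  have h2 : IsHomogP (Finsupp.single X (1 : ℂ)) (pN X) := isHomogP_single _ _
  have key := hd.2.2 0 (pN X) (bL b) (Finsupp.single X 1)
    (inL_single Γ s (BasisL.L b) hb 1) (inL_single Γ s X hX 1) h1 h2
  rw [hdb, act_zero, smul_zero, sub_zero, Nat.mul_zero, pow_zero, one_smul,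
    br_single, bb_L, map_smul] at key
  exact key

lemma kill_single (Γ : AddSubgroup ℝ) (s : ℝ)
    (ε : ℝ) (hε : ε ∈ Γ) (hεpos : 0 < ε)
    (ι : ℕ) (d : LL →ₗ[ℂ] VV) (hd : IsDer Γ s ι d) (hdeg : HasDeg Γ s 0 d)
    (hL : ∀ k : ℤ, d (bL (ε * k)) = 0)
    (X : BasisL) (hX : good Γ s X) : d (Finsupp.single X 1) = 0 := by
  set u : VV := d (Finsupp.single X 1) with hu_def
  have hu : inCompV Γ s (degB X + 0) u := by
    apply hdeg
    intro a ha
    have := Finsupp.support_single_subset ha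
    rw [Finset.mem_singleton] at this
    subst this
    exact ⟨hX, rfl⟩
  apply Finsupp.ext
  rintro ⟨x, y⟩
  rw [Finsupp.coe_zero, Pi.zero_apply]
  by_cases hmem : (x, y) ∈ u.support
  swap
  · exact Finsupp.notMem_support_iff.mp hmem
  obtain ⟨hgx, hgy, hdxy⟩ := hu _ hmem
  set S : ℝ := u.support.sum (fun p => |degB p.1|) with hS_def
  have hSb : ∀ p ∈ u.support, |degB p.1| ≤ S := by
    intro p hp
    rw [hS_def]
    exact Finset.single_le_sum (f := fun q => |degB q.1|) (fun q _ => abs_nonneg _) hp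
  set A : ℝ := cc0 X - cc0 x - cc0 y with hA_def
  have hA : A ≠ 0 := by
    rw [hA_def]; cases X <;> cases x <;> cases y <;> norm_num [cc0]
  set B' : ℝ := degB X ^ 2 - degB x ^ 2 - degB y ^ 2 with hB_def
  have hBA : (0:ℝ) ≤ |B'| / |A| := div_nonneg (abs_nonneg _) (abs_nonneg _)
  set C : ℝ := 1 + |B'| / |A| + |degB x| + S with hC_def
  obtain ⟨m, hm⟩ := exists_nat_gt (C / ε)
  have haC : C < (m : ℝ) * ε := by
    rw [div_lt_iff₀ hεpos] at hm; exact hm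
  set a : ℝ := (m : ℝ) * ε with ha_def
  rw [hC_def] at haC
  have hS0 : 0 ≤ S := by
    rw [hS_def]; exact Finset.sum_nonneg (fun q _ => abs_nonneg _)
  have hax0 : 0 ≤ |degB x| := abs_nonneg _
  have ha1 : 1 < a := by linarith
  have haΓ : a ∈ Γ := by
    have h := AddSubgroup.nsmul_mem Γ hε m
    rwa [nsmul_eq_mul] at h
  have hda : d (bL a) = 0 := by
    have h := hL (m : ℤ)
    rwa [show ε * ((m : ℤ) : ℝ) = a by push_cast [ha_def]; ring] at h
  have hdna : d (bL (-a)) = 0 := by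
    have h := hL (-(m : ℤ))
    rwa [show ε * ((-(m : ℤ) : ℤ) : ℝ) = -a by push_cast [ha_def]; ring] at h
  -- cross terms vanish
  have habs : ∀ t : ℝ, S < |t + a| ∧ S < |t + -a| → True := fun _ _ => trivial
  have hcross1 : u (sh (-a) x, sh a y) = 0 := by
    rw [← Finsupp.notMem_support_iff]
    intro hc
    have h1 := hSb _ hc
    rw [degB_sh] at h1
    have h2 : degB x ≤ |degB x| := le_abs_self _
    have h3 : -(degB x + -a) ≤ |degB x + -a| := neg_le_abs _
    linarith
  have hcross2 : u (sh a x, sh (-a) y) = 0 := by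
    rw [← Finsupp.notMem_support_iff]
    intro hc
    have h1 := hSb _ hc
    rw [degB_sh] at h1
    have h2 : -(degB x) ≤ |degB x| := neg_le_abs _
    have h3 : degB x + a ≤ |degB x + a| := le_abs_self _
    linarith
  -- the two derivation equations, coefficientwise
  set X' : BasisL := sh (-a) X with hX'_def
  have hX' : good Γ s X' := good_sh Γ s (-a) (AddSubgroup.neg_mem Γ haΓ) X hX
  set w : VV := d (Finsupp.single X' 1) with hw_def
  have eqA : ∀ p q : BasisL,
      co (-a) X * w (p, q)
        = co (-a) (sh a p) * u (sh a p, q) + co (-a) (sh a q) * u (p, sh a q) := by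
    intro p q
    have h := der_step Γ s ι d hd (-a) (AddSubgroup.neg_mem Γ haΓ) hdna X hX
    have h2 := DFunLike.congr_fun h (p, q)
    rw [Finsupp.smul_apply, smul_eq_mul] at h2
    rw [← hX'_def, ← hw_def, ← hu_def] at h2
    rw [h2, act_bL_apply, neg_neg]
  have eqB : co a X' * u (x, y)
      = co a (sh (-a) x) * w (sh (-a) x, y) + co a (sh (-a) y) * w (x, sh (-a) y) := by
    have h := der_step Γ s ι d hd a haΓ hda X' hX'
    rw [hX'_def, sh_neg_cancel] at h
    have h2 := DFunLike.congr_fun h (x, y)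
    rw [Finsupp.smul_apply, smul_eq_mul] at h2
    rw [h2, act_bL_apply]
  -- combine
  have comb : (co a (sh (-a) X) * co (-a) X) * u (x, y)
      = (co a (sh (-a) x) * co (-a) x + co a (sh (-a) y) * co (-a) y) * u (x, y) := by
    have e1 := eqA (sh (-a) x) y
    have e2 := eqA x (sh (-a) y)
    rw [sh_neg_cancel, hcross1] at e1
    rw [sh_neg_cancel, hcross2] at e2
    have := congrArg (co (-a) X * ·) eqB
    calc (co a (sh (-a) X) * co (-a) X) * u (x, y)
        = co (-a) X * (co a X' * u (x, y)) := by rw [hX'_def]; ring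
      _ = co (-a) X * (co a (sh (-a) x) * w (sh (-a) x, y)
            + co a (sh (-a) y) * w (x, sh (-a) y)) := by rw [eqB]
      _ = co a (sh (-a) x) * (co (-a) X * w (sh (-a) x, y))
            + co a (sh (-a) y) * (co (-a) X * w (x, sh (-a) y)) := by ring
      _ = co a (sh (-a) x) * (co (-a) x * u (x, y) + co (-a) (sh a y) * 0)
            + co a (sh (-a) y) * (co (-a) (sh a x) * 0 + co (-a) y * u (x, y)) := by
          rw [e1, e2]
      _ = _ := by ring
  -- numeric conclusion
  rw [nu_eq, nu_eq, nu_eq] at comb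
  have hsum : degB x + degB y = degB X := by simpa using hdxy
  have key : ((A * a ^ 2 + B' : ℝ) : ℂ) * u (x, y) = 0 := by
    have : ((A * a ^ 2 + B' : ℝ) : ℂ)
        = ((cc0 X * a ^ 2 - degB X * a + degB X ^ 2 : ℝ) : ℂ)
          - (((cc0 x * a ^ 2 - degB x * a + degB x ^ 2 : ℝ) : ℂ)
            + ((cc0 y * a ^ 2 - degB y * a + degB y ^ 2 : ℝ) : ℂ)) := by
      push_cast
      rw [hA_def, hB_def, ← hsum]
      push_cast
      ring
    rw [this]
    rw [sub_mul, add_mul, comb]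
    ring
  have hane : A * a ^ 2 + B' ≠ 0 := by
    intro h0
    have haB : |B'| / |A| < a := by linarith
    have hApos : 0 < |A| := abs_pos.mpr hA
    have h1 : |B'| < |A| * a := by
      have := (div_lt_iff₀ hApos).mp haB
      linarith [this]
    have h2 : |A| * a < |A| * a ^ 2 := by
      have : a < a ^ 2 := by nlinarith
      exact (mul_lt_mul_iff_right₀ hApos).mpr this
    have h3 : |A * a ^ 2| = |A| * a ^ 2 := by
      rw [abs_mul, abs_of_nonneg (by positivity : (0:ℝ) ≤ a ^ 2)]
    have h4 : A * a ^ 2 = -B' := by linarith [h0]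
    rw [h4, abs_neg] at h3
    linarith
  have : u (x, y) = 0 := by
    rcases mul_eq_zero.mp key with h | h
    · exact absurd (Complex.ofReal_eq_zero.mp h) hane
    · exact h
  exact this

/-- case s ∈ Γ: if a degree-0 derivation d₀ : 𝔏 → 𝔏⊗𝔏 kills
all L_{kε} (k ∈ ℤ), then it kills every G_p, and likewise every L_p, I_p,
H_p, hence d₀ = 0 on 𝔏. -/
theorem stmt12 (Γ : AddSubgroup ℝ) (hΓ : Γ ≠ ⊥) (s : ℝ) (hs : s ∈ Γ)
    (ε : ℝ) (hε : ε ∈ Γ) (hεpos : 0 < ε)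
    (ι : ℕ) (d : LL →ₗ[ℂ] VV) (hd : IsDer Γ s ι d) (hdeg : HasDeg Γ s 0 d)
    (hL : ∀ k : ℤ, d (bL (ε * k)) = 0) :
    (∀ p ∈ Γ, d (bG p) = 0 ∧ d (bL p) = 0 ∧ d (bI p) = 0 ∧ d (bH p) = 0) ∧
    (∀ x : LL, inL Γ s x → d x = 0) := by
  have main : ∀ X : BasisL, good Γ s X → d (Finsupp.single X 1) = 0 :=
    kill_single Γ s ε hε hεpos ι d hd hdeg hL
  constructor
  · intro p hp
    refine ⟨main (BasisL.G p) ?_, main (BasisL.L p) hp, main (BasisL.I p) hp,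
      main (BasisL.H p) ?_⟩
    · exact AddSubgroup.sub_mem Γ hp hs
    · exact AddSubgroup.sub_mem Γ hp hs
  · intro x hx
    have hx' : x = x.sum fun a c => Finsupp.single a c := (Finsupp.sum_single x).symm
    rw [hx', map_finsuppSum]
    apply Finset.sum_eq_zero
    intro a ha
    show d (Finsupp.single a (x a)) = 0
    have : Finsupp.single a (x a) = (x a) • Finsupp.single a (1 : ℂ) := by
      rw [Finsupp.smul_single', mul_one]
    rw [this, map_smul, main a (hx a ha), smul_zero]
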